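/- Let M, D⁻, D⁺, D₂ = D⁻D⁺ satisfy the periodic upwind gSBP properties ((D⁻)ᵀM = -MD⁺ and uᵀMD⁻u ≥ 0 for all u). Let γ = 1 - √2/2, δ = 1 - 1/(2γ), a, c > 0. If u⁽¹⁾ = uⁿ + Δtγ(-aD⁻uⁿ + cD₂u⁽¹⁾) and uⁿ⁺¹ = uⁿ - Δt(δaD⁻uⁿ + (1-δ)aD⁻u⁽¹⁾) + Δt((1-γ)cD₂u⁽¹⁾ + γcD₂uⁿ⁺¹), and Δt ≤ c/(11a²), then ‖uⁿ⁺¹‖_M ≤ ‖uⁿ‖_M. -/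

import Mathlib

open Matrix

set_option maxHeartbeats 1000000 in

theorem stmt_14 {n : ℕ} (M Dm Dp : Matrix (Fin n) (Fin n) ℝ)
    (hM : M.PosDef) (hMsym : M.IsSymm)
    (hSBP : Dmᵀ * M = -(M * Dp))
    (hdiss : ∀ u : Fin n → ℝ, 0 ≤ (Dm *ᵥ u) ⬝ᵥ (M *ᵥ u))
    (D2 : Matrix (Fin n) (Fin n) ℝ) (hD2 : D2 = Dm * Dp)
    (γ δ : ℝ) (hγ : γ = 1 - Real.sqrt 2 / 2) (hδ : δ = 1 - 1 / (2 * γ))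
    (a c Δt : ℝ) (ha : 0 < a) (hc : 0 < c) (hΔt : 0 < Δt)
    (hstep : Δt ≤ c / (11 * a^2))
    (un u1 un1 : Fin n → ℝ)
    (hstage : u1 = un + (Δt * γ) • (-(a • (Dm *ᵥ un)) + c • (D2 *ᵥ u1)))
    (hfinal : un1 = un - Δt • ((δ * a) • (Dm *ᵥ un) + ((1 - δ) * a) • (Dm *ᵥ u1))
        + Δt • (((1 - γ) * c) • (D2 *ᵥ u1) + (γ * c) • (D2 *ᵥ un1))) :
    Real.sqrt (un1 ⬝ᵥ (M *ᵥ un1)) ≤ Real.sqrt (un ⬝ᵥ (M *ᵥ un)) := by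
  set s : ℝ := Real.sqrt 2 with hsdef
  have hs2 : s ^ 2 = 2 := Real.sq_sqrt (by norm_num)
  have hs_pos : 0 < s := Real.sqrt_pos.mpr (by norm_num)
  have hs_lt : s < 142 / 100 := by nlinarith
  have hs_gt : 141 / 100 < s := by nlinarith
  have hγs : γ = 1 - s / 2 := hγ
  have hδs : δ = -(s / 2) := by
    have h2γ : 2 * γ = 2 - s := by rw [hγs]; ring
    have hne : (2 : ℝ) - s ≠ 0 := by nlinarith
    rw [hδ, h2γ]
    field_simp
    nlinarith
  -- inner product basic facts
  have hpos : ∀ x : Fin n → ℝ, 0 ≤ x ⬝ᵥ (M *ᵥ x) := fun x => by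
    simpa using hM.posSemidef.dotProduct_mulVec_nonneg x
  have hsym : ∀ x y : Fin n → ℝ, x ⬝ᵥ (M *ᵥ y) = y ⬝ᵥ (M *ᵥ x) := fun x y => by
    rw [dotProduct_mulVec, dotProduct_comm, ← mulVec_transpose, hMsym.eq]
  have hMDm : M * Dm = -(Dpᵀ * M) := by
    have h := congrArg Matrix.transpose hSBP
    simpa [Matrix.transpose_mul, hMsym.eq] using h
  have hadj : ∀ x y : Fin n → ℝ,
      x ⬝ᵥ (M *ᵥ (Dm *ᵥ y)) = -((Dp *ᵥ x) ⬝ᵥ (M *ᵥ y)) := by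
    intro x y
    calc x ⬝ᵥ (M *ᵥ (Dm *ᵥ y)) = x ⬝ᵥ ((M * Dm) *ᵥ y) := by rw [mulVec_mulVec]
    _ = x ⬝ᵥ (-(Dpᵀ * M) *ᵥ y) := by rw [hMDm]
    _ = -(x ⬝ᵥ ((Dpᵀ * M) *ᵥ y)) := by rw [neg_mulVec, dotProduct_neg]
    _ = -(x ⬝ᵥ (Dpᵀ *ᵥ (M *ᵥ y))) := by rw [← mulVec_mulVec]
    _ = -((Dp *ᵥ x) ⬝ᵥ (M *ᵥ y)) := by rw [dotProduct_mulVec, vecMul_transpose]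
  have hadj2 : ∀ x y : Fin n → ℝ,
      x ⬝ᵥ (M *ᵥ (D2 *ᵥ y)) = -((Dp *ᵥ x) ⬝ᵥ (M *ᵥ (Dp *ᵥ y))) := by
    intro x y
    have h1 : D2 *ᵥ y = Dm *ᵥ (Dp *ᵥ y) := by rw [hD2, ← mulVec_mulVec]
    rw [h1]
    exact hadj x (Dp *ᵥ y)
  have hdis : ∀ x : Fin n → ℝ, (Dp *ᵥ x) ⬝ᵥ (M *ᵥ x) ≤ 0 := by
    intro x
    have h1 := hdiss x
    have h2 : (Dm *ᵥ x) ⬝ᵥ (M *ᵥ x) = x ⬝ᵥ (M *ᵥ (Dm *ᵥ x)) := hsym (Dm *ᵥ x) x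
    have h3 := hadj x x
    linarith
  -- step-size condition
  have hα2 : 11 * (Δt * a) ^ 2 ≤ Δt * c := by
    have h1 : Δt * (11 * a ^ 2) ≤ c := by
      rw [div_eq_mul_inv] at hstep
      have h11 : (0 : ℝ) < 11 * a ^ 2 := by positivity
      calc Δt * (11 * a ^ 2) ≤ (c * (11 * a ^ 2)⁻¹) * (11 * a ^ 2) := by
            exact mul_le_mul_of_nonneg_right hstep (le_of_lt h11)
        _ = c := by field_simp
    nlinarith [hΔt, h1]
  -- pairing identities
  have hJ1 : u1 ⬝ᵥ (M *ᵥ u1) - un ⬝ᵥ (M *ᵥ u1) =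
      (1 - s / 2) * (Δt * a) * ((Dp *ᵥ u1) ⬝ᵥ (M *ᵥ un))
      - (1 - s / 2) * (Δt * c) * ((Dp *ᵥ u1) ⬝ᵥ (M *ᵥ (Dp *ᵥ u1))) := by
    have h := congrArg (fun v => u1 ⬝ᵥ (M *ᵥ v)) hstage
    simp only [mulVec_add, mulVec_smul, mulVec_neg, dotProduct_add, dotProduct_smul,
      dotProduct_neg, smul_eq_mul] at h
    rw [hadj u1 un, hadj2 u1 u1, hγs, hsym u1 un] at h
    linarith [h]
  have hJ2 : u1 ⬝ᵥ (M *ᵥ un1) - un ⬝ᵥ (M *ᵥ un1) =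
      (1 - s / 2) * (Δt * a) * ((Dp *ᵥ un1) ⬝ᵥ (M *ᵥ un))
      - (1 - s / 2) * (Δt * c) * ((Dp *ᵥ u1) ⬝ᵥ (M *ᵥ (Dp *ᵥ un1))) := by
    have h := congrArg (fun v => un1 ⬝ᵥ (M *ᵥ v)) hstage
    simp only [mulVec_add, mulVec_smul, mulVec_neg, dotProduct_add, dotProduct_smul,
      dotProduct_neg, smul_eq_mul] at h
    rw [hadj un1 un, hadj2 un1 u1, hγs, hsym un1 u1, hsym un1 un,
      hsym (Dp *ᵥ un1) (Dp *ᵥ u1)] at h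
    linarith [h]
  have hJ3 : u1 ⬝ᵥ (M *ᵥ un1) - un ⬝ᵥ (M *ᵥ u1) =
      (-(s / 2)) * (Δt * a) * ((Dp *ᵥ u1) ⬝ᵥ (M *ᵥ un))
      + (1 + s / 2) * (Δt * a) * ((Dp *ᵥ u1) ⬝ᵥ (M *ᵥ u1))
      - (s / 2) * (Δt * c) * ((Dp *ᵥ u1) ⬝ᵥ (M *ᵥ (Dp *ᵥ u1)))
      - (1 - s / 2) * (Δt * c) * ((Dp *ᵥ u1) ⬝ᵥ (M *ᵥ (Dp *ᵥ un1))) := by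
    have h := congrArg (fun v => u1 ⬝ᵥ (M *ᵥ v)) hfinal
    simp only [mulVec_add, mulVec_sub, mulVec_smul, mulVec_neg, dotProduct_add,
      dotProduct_sub, dotProduct_smul, dotProduct_neg, smul_eq_mul] at h
    rw [hadj u1 un, hadj u1 u1, hadj2 u1 u1, hadj2 u1 un1, hγs, hδs, hsym u1 un] at h
    linarith [h]
  have hJ4 : un1 ⬝ᵥ (M *ᵥ un1) - un ⬝ᵥ (M *ᵥ un1) =
      (-(s / 2)) * (Δt * a) * ((Dp *ᵥ un1) ⬝ᵥ (M *ᵥ un))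
      + (1 + s / 2) * (Δt * a) * ((Dp *ᵥ un1) ⬝ᵥ (M *ᵥ u1))
      - (s / 2) * (Δt * c) * ((Dp *ᵥ u1) ⬝ᵥ (M *ᵥ (Dp *ᵥ un1)))
      - (1 - s / 2) * (Δt * c) * ((Dp *ᵥ un1) ⬝ᵥ (M *ᵥ (Dp *ᵥ un1))) := by
    have h := congrArg (fun v => un1 ⬝ᵥ (M *ᵥ v)) hfinal
    simp only [mulVec_add, mulVec_sub, mulVec_smul, mulVec_neg, dotProduct_add,
      dotProduct_sub, dotProduct_smul, dotProduct_neg, smul_eq_mul] at h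
    rw [hadj un1 un, hadj un1 u1, hadj2 un1 u1, hadj2 un1 un1, hγs, hδs, hsym un1 un,
      hsym (Dp *ᵥ un1) (Dp *ᵥ u1)] at h
    linarith [h]
  -- square expansions
  have hv1 : 0 ≤ un1 ⬝ᵥ (M *ᵥ un1) - 2 * (u1 ⬝ᵥ (M *ᵥ un1)) + u1 ⬝ᵥ (M *ᵥ u1)
      + (3 * s / 2 * (Δt * a)) * ((Dp *ᵥ un1) ⬝ᵥ (M *ᵥ un1))
      - (3 * s / 2 * (Δt * a)) * ((Dp *ᵥ un1) ⬝ᵥ (M *ᵥ u1))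
      + (9 / 8 * (Δt * a) ^ 2) * ((Dp *ᵥ un1) ⬝ᵥ (M *ᵥ (Dp *ᵥ un1))) := by
    have h := hpos (un1 - u1 + (3 * s / 4 * (Δt * a)) • (Dp *ᵥ un1))
    have E : (un1 - u1 + (3 * s / 4 * (Δt * a)) • (Dp *ᵥ un1)) ⬝ᵥ
        (M *ᵥ (un1 - u1 + (3 * s / 4 * (Δt * a)) • (Dp *ᵥ un1)))
        = un1 ⬝ᵥ (M *ᵥ un1) - 2 * (u1 ⬝ᵥ (M *ᵥ un1)) + u1 ⬝ᵥ (M *ᵥ u1)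
        + (3 * s / 2 * (Δt * a)) * ((Dp *ᵥ un1) ⬝ᵥ (M *ᵥ un1))
        - (3 * s / 2 * (Δt * a)) * ((Dp *ᵥ un1) ⬝ᵥ (M *ᵥ u1))
        + (9 / 8 * (Δt * a) ^ 2) * ((Dp *ᵥ un1) ⬝ᵥ (M *ᵥ (Dp *ᵥ un1))) := by
      simp only [mulVec_add, mulVec_sub, mulVec_smul, add_dotProduct, sub_dotProduct,
        smul_dotProduct, dotProduct_add, dotProduct_sub, dotProduct_smul, smul_eq_mul]
      linear_combination (hsym u1 un1) + (3*s/4*(Δt*a))*(hsym un1 (Dp *ᵥ un1))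
        - (3*s/4*(Δt*a))*(hsym u1 (Dp *ᵥ un1))
        + (9/16*(Δt*a)^2*((Dp *ᵥ un1) ⬝ᵥ (M *ᵥ (Dp *ᵥ un1))))*hs2
    rw [E] at h
    exact h
  have hv2 : 0 ≤ u1 ⬝ᵥ (M *ᵥ u1) - 2 * (un ⬝ᵥ (M *ᵥ u1)) + un ⬝ᵥ (M *ᵥ un)
      + ((3 - 2 * s) / 2 * (Δt * a)) * ((Dp *ᵥ u1) ⬝ᵥ (M *ᵥ u1))
      - ((3 - 2 * s) / 2 * (Δt * a)) * ((Dp *ᵥ u1) ⬝ᵥ (M *ᵥ un))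
      - (3 / 2 * (Δt * a)) * ((Dp *ᵥ un1) ⬝ᵥ (M *ᵥ u1))
      + (3 / 2 * (Δt * a)) * ((Dp *ᵥ un1) ⬝ᵥ (M *ᵥ un))
      + ((17 - 12 * s) / 16 * (Δt * a) ^ 2) * ((Dp *ᵥ u1) ⬝ᵥ (M *ᵥ (Dp *ᵥ u1)))
      + ((6 * s - 9) / 8 * (Δt * a) ^ 2) * ((Dp *ᵥ u1) ⬝ᵥ (M *ᵥ (Dp *ᵥ un1)))
      + (9 / 16 * (Δt * a) ^ 2) * ((Dp *ᵥ un1) ⬝ᵥ (M *ᵥ (Dp *ᵥ un1))) := by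
    have h := hpos (u1 - un + ((3 - 2 * s) / 4 * (Δt * a)) • (Dp *ᵥ u1)
        - (3 / 4 * (Δt * a)) • (Dp *ᵥ un1))
    have E : (u1 - un + ((3 - 2 * s) / 4 * (Δt * a)) • (Dp *ᵥ u1)
        - (3 / 4 * (Δt * a)) • (Dp *ᵥ un1)) ⬝ᵥ (M *ᵥ (u1 - un
        + ((3 - 2 * s) / 4 * (Δt * a)) • (Dp *ᵥ u1) - (3 / 4 * (Δt * a)) • (Dp *ᵥ un1)))
        = u1 ⬝ᵥ (M *ᵥ u1) - 2 * (un ⬝ᵥ (M *ᵥ u1)) + un ⬝ᵥ (M *ᵥ un)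
        + ((3 - 2 * s) / 2 * (Δt * a)) * ((Dp *ᵥ u1) ⬝ᵥ (M *ᵥ u1))
        - ((3 - 2 * s) / 2 * (Δt * a)) * ((Dp *ᵥ u1) ⬝ᵥ (M *ᵥ un))
        - (3 / 2 * (Δt * a)) * ((Dp *ᵥ un1) ⬝ᵥ (M *ᵥ u1))
        + (3 / 2 * (Δt * a)) * ((Dp *ᵥ un1) ⬝ᵥ (M *ᵥ un))
        + ((17 - 12 * s) / 16 * (Δt * a) ^ 2) * ((Dp *ᵥ u1) ⬝ᵥ (M *ᵥ (Dp *ᵥ u1)))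
        + ((6 * s - 9) / 8 * (Δt * a) ^ 2) * ((Dp *ᵥ u1) ⬝ᵥ (M *ᵥ (Dp *ᵥ un1)))
        + (9 / 16 * (Δt * a) ^ 2) * ((Dp *ᵥ un1) ⬝ᵥ (M *ᵥ (Dp *ᵥ un1))) := by
      simp only [mulVec_add, mulVec_sub, mulVec_smul, add_dotProduct, sub_dotProduct,
        smul_dotProduct, dotProduct_add, dotProduct_sub, dotProduct_smul, smul_eq_mul]
      linear_combination (-1 : ℝ)*(hsym u1 un)
        + ((3-2*s)/4*(Δt*a))*(hsym u1 (Dp *ᵥ u1))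
        - ((3-2*s)/4*(Δt*a))*(hsym un (Dp *ᵥ u1))
        - (3/4*(Δt*a))*(hsym u1 (Dp *ᵥ un1))
        + (3/4*(Δt*a))*(hsym un (Dp *ᵥ un1))
        + ((9-6*s)/16*(Δt*a)^2)*(hsym (Dp *ᵥ u1) (Dp *ᵥ un1))
        + (1/4*(Δt*a)^2*((Dp *ᵥ u1) ⬝ᵥ (M *ᵥ (Dp *ᵥ u1))))*hs2
    rw [E] at h
    exact h
  have hv3 : 0 ≤ (Dp *ᵥ u1) ⬝ᵥ (M *ᵥ (Dp *ᵥ u1)) + (Dp *ᵥ u1) ⬝ᵥ (M *ᵥ (Dp *ᵥ un1))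
      + 1 / 4 * ((Dp *ᵥ un1) ⬝ᵥ (M *ᵥ (Dp *ᵥ un1))) := by
    have h := hpos ((Dp *ᵥ u1) + (1 / 2 : ℝ) • (Dp *ᵥ un1))
    simp only [mulVec_add, mulVec_smul, add_dotProduct, smul_dotProduct, dotProduct_add,
      dotProduct_smul, smul_eq_mul] at h
    have e6 := hsym (Dp *ᵥ u1) (Dp *ᵥ un1)
    linarith [h, e6]
  -- nonnegative coefficients
  have hXYp : 0 ≤ (5 * s - 4) / 4 * (Δt * c) + (9 - 6 * s) / 8 * (Δt * a) ^ 2 := by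
    have h1 : 0 ≤ Δt * c := by positivity
    nlinarith [sq_nonneg (Δt * a), h1]
  have hc4 : 0 ≤ (10 - 7 * s) / 4 * (Δt * c) - (35 - 24 * s) / 16 * (Δt * a) ^ 2 := by
    nlinarith [hα2, sq_nonneg (Δt * a)]
  have hc5 : 0 ≤ (28 - 17 * s) / 16 * (Δt * c) - (45 - 6 * s) / 32 * (Δt * a) ^ 2 := by
    nlinarith [hα2, sq_nonneg (Δt * a)]
  have hxx := hpos (Dp *ᵥ u1)
  have hyy := hpos (Dp *ᵥ un1)
  have hx1 : (Dp *ᵥ u1) ⬝ᵥ (M *ᵥ u1) ≤ 0 := hdis u1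
  have hy2 : (Dp *ᵥ un1) ⬝ᵥ (M *ᵥ un1) ≤ 0 := hdis un1
  have hν1 : 0 ≤ (8 - 3 * s) / 4 * (Δt * a) := by nlinarith [hΔt, ha]
  have hν2 : 0 ≤ 3 * s / 4 * (Δt * a) := by positivity
  have hP3 := mul_nonneg hXYp hv3
  have hP4 := mul_nonneg hc4 hxx
  have hP5 := mul_nonneg hc5 hyy
  have hR1 := mul_nonneg hν1 (neg_nonneg.mpr hx1)
  have hR2 := mul_nonneg hν2 (neg_nonneg.mpr hy2)
  -- symmetry facts used by the final combination
  have e01 := hsym un u1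
  have e02 := hsym un un1
  have e12 := hsym u1 un1
  have exy := hsym (Dp *ᵥ u1) (Dp *ᵥ un1)
  -- final energy inequality
  have key : un1 ⬝ᵥ (M *ᵥ un1) ≤ un ⬝ᵥ (M *ᵥ un) := by
    linarith [hJ1, hJ2, hJ3, hJ4, hv1, hv2, hP3, hP4, hP5, hR1, hR2, e01, e02, e12, exy]
  exact Real.sqrt_le_sqrt key
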